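/- A finite partial cube is strongly peripheral (i.e., W_ab and W_ba are peripheries for every edge ab) if and only if it is a hypercube. -/

import Mathlib

open SimpleGraph

universe u

variable {V : Type u}

/-- The geodesic interval between two vertices: the set of vertices lying on
shortest paths between them. -/
def gInterval (G : SimpleGraph V) (x y : V) : Set V :=
  {z | G.dist x z + G.dist z y = G.dist x y}

/-- A set of vertices is (geodesically) convex. -/
def GConvex (G : SimpleGraph V) (C : Set V) : Prop :=
  ∀ x ∈ C, ∀ y ∈ C, gInterval G x y ⊆ C

/-- `Wside G a b` is the set `W_ab` of vertices strictly closer to `a` than to `b`. -/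
def Wside (G : SimpleGraph V) (a b : V) : Set V :=
  {x | G.dist a x < G.dist b x}

/-- `Uside G a b` is the set `U_ab` of vertices of `W_ab` having a neighbour in `W_ba`. -/
def Uside (G : SimpleGraph V) (a b : V) : Set V :=
  {x | x ∈ Wside G a b ∧ ∃ y, G.Adj x y ∧ y ∈ Wside G b a}

/-- A graph is bipartite if it admits a proper 2-colouring. -/
def IsBipartiteGraph (G : SimpleGraph V) : Prop :=
  ∃ c : V → Bool, ∀ u v, G.Adj u v → c u ≠ c v

/-- A partial cube: a connected bipartite graph all of whose half-spaces `W_ab`, `W_ba`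
are convex (Djoković's characterization). -/
def IsPartialCube (G : SimpleGraph V) : Prop :=
  G.Connected ∧ IsBipartiteGraph G ∧
    ∀ a b, G.Adj a b → GConvex G (Wside G a b) ∧ GConvex G (Wside G b a)

/-- The Djoković–Winkler relation Θ between (unordered) edges. -/
def ThetaRel (G : SimpleGraph V) (e f : Sym2 V) : Prop :=
  ∃ x y u v : V, e = s(x, y) ∧ f = s(u, v) ∧
    G.dist x u + G.dist y v ≠ G.dist x v + G.dist y u

/-- The geodesic convex hull of a set of vertices. -/
def gConvexHull (G : SimpleGraph V) (A : Set V) : Set V :=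
  ⋂₀ {C : Set V | GConvex G C ∧ A ⊆ C}

/-- The hypercube of dimension `n`: vertices are functions `Fin n → Bool`,
adjacent iff they differ in exactly one coordinate. -/
def cubeGraph (n : ℕ) : SimpleGraph (Fin n → Bool) where
  Adj x y := ∃! i, x i ≠ y i
  symm := by
    constructor
    rintro x y ⟨i, hi, hu⟩
    exact ⟨i, hi.symm, fun j hj => hu j hj.symm⟩
  loopless := by
    constructor
    rintro x ⟨i, hi, -⟩
    exact hi rfl

universe v

/-! ### Auxiliary lemmas -/

section Aux

variable {W : Type v} {G : SimpleGraph V} {H : SimpleGraph W} {c : V → Bool}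

lemma iso_dist (φ : G ≃g H) (u v : V) : H.dist (φ u) (φ v) = G.dist u v := by
  by_cases hr : G.Reachable u v
  · obtain ⟨p, hp⟩ := hr.exists_walk_length_eq_dist
    have le1 : H.dist (φ u) (φ v) ≤ G.dist u v := by
      have := dist_le (p.map φ.toHom)
      simpa [hp] using this
    have hrH : H.Reachable (φ u) (φ v) := Iso.reachable_iff.mpr hr
    obtain ⟨q, hq⟩ := hrH.exists_walk_length_eq_dist
    have le2 : G.dist u v ≤ H.dist (φ u) (φ v) := by
      rw [← hq]
      have := dist_le ((q.map φ.symm.toHom).copy (φ.symm_apply_apply u) (φ.symm_apply_apply v))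
      simpa using this
    omega
  · rw [dist_eq_zero_of_not_reachable hr,
      dist_eq_zero_of_not_reachable (fun h => hr (Iso.reachable_iff.mp h))]

lemma iso_Wside (φ : G ≃g H) (a b x : V) :
    x ∈ Wside G a b ↔ φ x ∈ Wside H (φ a) (φ b) := by
  simp only [Wside, Set.mem_setOf_eq, iso_dist φ]

lemma walk_parity (hc : ∀ u v, G.Adj u v → c u ≠ c v) {u v : V} (p : G.Walk u v) :
    (c u = c v) ↔ Even p.length := by
  induction p with
  | nil => simp
  | cons h p ih =>
    rename_i a b w
    simp only [Walk.length_cons, Nat.even_add_one]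
    have hab := hc _ _ h
    constructor
    · intro hcc
      rw [← ih]
      intro hbw
      exact hab (hcc.trans hbw.symm)
    · intro hne
      have : ¬ (c b = c w) := fun hh => hne (ih.mp hh)
      revert hab this; cases c a <;> cases c b <;> cases c w <;> simp

lemma dist_parity (hc : ∀ u v, G.Adj u v → c u ≠ c v) {u v : V}
    (hr : G.Reachable u v) : (c u = c v) ↔ Even (G.dist u v) := by
  obtain ⟨p, hp⟩ := hr.exists_walk_length_eq_dist
  rw [← hp]; exact walk_parity hc p

lemma side_dichotomy (hconn : G.Connected) (hc : ∀ u v, G.Adj u v → c u ≠ c v)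
    {a b : V} (hab : G.Adj a b) (x : V) :
    G.dist b x = G.dist a x + 1 ∨ G.dist a x = G.dist b x + 1 := by
  have h1 : G.dist a x ≤ G.dist b x + 1 := by
    calc G.dist a x ≤ G.dist a b + G.dist b x := hconn.dist_triangle
    _ = G.dist b x + 1 := by rw [dist_eq_one_iff_adj.mpr hab]; omega
  have h2 : G.dist b x ≤ G.dist a x + 1 := by
    calc G.dist b x ≤ G.dist b a + G.dist a x := hconn.dist_triangle
    _ = G.dist a x + 1 := by rw [dist_eq_one_iff_adj.mpr hab.symm]; omega
  have hne : G.dist a x ≠ G.dist b x := by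
    intro he
    have p1 := dist_parity hc (hconn a x)
    have p2 := dist_parity hc (hconn b x)
    rw [he] at p1
    have := hc _ _ hab
    rw [← p2] at p1
    revert this p1; cases c a <;> cases c b <;> cases c x <;> simp
  omega

lemma Wside_disjoint {a b x : V}
    (h1 : x ∈ Wside G a b) (h2 : x ∈ Wside G b a) : False := by
  simp only [Wside, Set.mem_setOf_eq] at h1 h2; omega

lemma Wside_union (hconn : G.Connected) (hc : ∀ u v, G.Adj u v → c u ≠ c v)
    {a b : V} (hab : G.Adj a b) (x : V) :
    x ∈ Wside G a b ∨ x ∈ Wside G b a := by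
  have := side_dichotomy hconn hc hab x
  simp only [Wside, Set.mem_setOf_eq]
  omega

lemma cross_unique (hconn : G.Connected) (hc : ∀ u v, G.Adj u v → c u ≠ c v)
    {a b : V} (hcba : GConvex G (Wside G b a))
    {x y y' : V} (hx : x ∈ Wside G a b) (hxy : G.Adj x y) (hy : y ∈ Wside G b a)
    (hxy' : G.Adj x y') (hy' : y' ∈ Wside G b a) : y = y' := by
  by_contra hne
  have hd2 : G.dist y y' = 2 := by
    have hle : G.dist y y' ≤ 2 := by
      calc G.dist y y' ≤ G.dist y x + G.dist x y' := hconn.dist_triangle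
      _ = 2 := by
        rw [dist_eq_one_iff_adj.mpr hxy.symm, dist_eq_one_iff_adj.mpr hxy']
    have hpos : 0 < G.dist y y' := hconn.pos_dist_of_ne hne
    have heven : Even (G.dist y y') := by
      rw [← dist_parity hc (hconn y y')]
      have h1 := hc _ _ hxy
      have h2 := hc _ _ hxy'
      revert h1 h2; cases c x <;> cases c y <;> cases c y' <;> simp
    rcases heven with ⟨k, hk⟩; omega
  have hxint : x ∈ gInterval G y y' := by
    simp only [gInterval, Set.mem_setOf_eq, hd2,
      dist_eq_one_iff_adj.mpr hxy.symm, dist_eq_one_iff_adj.mpr hxy']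
  exact Wside_disjoint hx (hcba y hy y' hy' hxint)

lemma cross_dist (hconn : G.Connected) (hc : ∀ u v, G.Adj u v → c u ≠ c v)
    {a b : V} (hcab : GConvex G (Wside G a b))
    {x y u : V} (hx : x ∈ Wside G a b) (hy : y ∈ Wside G b a) (hxy : G.Adj x y)
    (hu : u ∈ Wside G a b) : G.dist u y = G.dist u x + 1 := by
  have h1 : G.dist u y ≤ G.dist u x + 1 := by
    calc G.dist u y ≤ G.dist u x + G.dist x y := hconn.dist_triangle
    _ = G.dist u x + 1 := by rw [dist_eq_one_iff_adj.mpr hxy]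
  have h2 : G.dist u x ≤ G.dist u y + 1 := by
    calc G.dist u x ≤ G.dist u y + G.dist y x := hconn.dist_triangle
    _ = G.dist u y + 1 := by rw [dist_eq_one_iff_adj.mpr hxy.symm]
  have hne : G.dist u x ≠ G.dist u y := by
    intro he
    have p1 := dist_parity hc (hconn u x)
    have p2 := dist_parity hc (hconn u y)
    have := hc _ _ hxy
    rw [he] at p1; rw [← p2] at p1
    revert this p1; cases c u <;> cases c x <;> cases c y <;> simp
  by_cases hcase : G.dist u x = G.dist u y + 1
  · exfalso
    have : y ∈ gInterval G u x := by
      simp only [gInterval, Set.mem_setOf_eq, dist_eq_one_iff_adj.mpr hxy.symm, hcase]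
    exact Wside_disjoint (hcab u hu x hx this) hy
  · omega

lemma cross_adj (hconn : G.Connected) (hc : ∀ u v, G.Adj u v → c u ≠ c v)
    {a b : V} (hcab : GConvex G (Wside G a b)) (hcba : GConvex G (Wside G b a))
    {x y x' y' : V} (hx : x ∈ Wside G a b) (hy : y ∈ Wside G a b)
    (hx' : x' ∈ Wside G b a) (hy' : y' ∈ Wside G b a)
    (hxx' : G.Adj x x') (hyy' : G.Adj y y') (hxy : G.Adj x y) : G.Adj x' y' := by
  have d1 : G.dist y x' = G.dist y x + 1 := cross_dist hconn hc hcab hx hx' hxx' hy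
  have d2 : G.dist x' y = G.dist x' y' + 1 := cross_dist hconn hc hcba hy' hy hyy'.symm hx'
  rw [dist_comm] at d1
  rw [dist_eq_one_iff_adj.mpr hxy.symm] at d1
  rw [d1] at d2
  exact dist_eq_one_iff_adj.mp (by omega)

lemma support_mem_interval (hconn : G.Connected) {u v z : V} (p : G.Walk u v)
    (hp : p.length = G.dist u v) (hz : z ∈ p.support) : z ∈ gInterval G u v := by
  classical
  have hsplit := congrArg Walk.length (p.take_spec hz)
  rw [Walk.length_append] at hsplit
  have h1 : G.dist u z ≤ (p.takeUntil z hz).length := dist_le _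
  have h2 : G.dist z v ≤ (p.dropUntil z hz).length := dist_le _
  have h3 : G.dist u v ≤ G.dist u z + G.dist z v := hconn.dist_triangle
  simp only [gInterval, Set.mem_setOf_eq]
  omega

lemma walk_lift_induce {s : Set V} : ∀ {u v : V} (p : G.Walk u v),
    (∀ z ∈ p.support, z ∈ s) → ∀ (hu : u ∈ s) (hv : v ∈ s),
    ∃ q : (G.induce s).Walk ⟨u, hu⟩ ⟨v, hv⟩, q.length = p.length := by
  intro u v p
  induction p with
  | nil => intro _ hu hv; exact ⟨Walk.nil, rfl⟩
  | cons h p ih =>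
    rename_i a b w
    intro hs ha hw
    have hb : b ∈ s := hs b (by simp)
    obtain ⟨q, hq⟩ := ih (fun z hz => hs z (by simp [hz])) hb hw
    exact ⟨Walk.cons (by exact h : (G.induce s).Adj ⟨a, ha⟩ ⟨b, hb⟩) q, by show q.length + 1 = p.length + 1; rw [hq]⟩

lemma dist_induce (hconn : G.Connected) {s : Set V} (hcvx : GConvex G s)
    {u v : V} (hu : u ∈ s) (hv : v ∈ s) :
    (G.induce s).dist ⟨u, hu⟩ ⟨v, hv⟩ = G.dist u v := by
  obtain ⟨p, hp⟩ := (hconn u v).exists_walk_length_eq_dist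
  have hsupp : ∀ z ∈ p.support, z ∈ s := fun z hz =>
    hcvx u hu v hv (support_mem_interval hconn p hp hz)
  obtain ⟨q, hq⟩ := walk_lift_induce p hsupp hu hv
  have hle : (G.induce s).dist ⟨u, hu⟩ ⟨v, hv⟩ ≤ G.dist u v := by
    rw [← hp, ← hq]; exact dist_le q
  have hr : (G.induce s).Reachable ⟨u, hu⟩ ⟨v, hv⟩ := ⟨q⟩
  obtain ⟨r, hrlen⟩ := hr.exists_walk_length_eq_dist
  have hge : G.dist u v ≤ (G.induce s).dist ⟨u, hu⟩ ⟨v, hv⟩ := by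
    rw [← hrlen]
    have := dist_le (r.map (SimpleGraph.Embedding.induce s).toHom)
    simpa using this.trans_eq (Walk.length_map _ r)
  omega

lemma induce_connected (hconn : G.Connected) {s : Set V} (hcvx : GConvex G s)
    (hne : s.Nonempty) : (G.induce s).Connected := by
  rw [connected_iff]
  constructor
  · rintro ⟨u, hu⟩ ⟨v, hv⟩
    obtain ⟨p, hp⟩ := (hconn u v).exists_walk_length_eq_dist
    have hsupp : ∀ z ∈ p.support, z ∈ s := fun z hz =>
      hcvx u hu v hv (support_mem_interval hconn p hp hz)
    obtain ⟨q, -⟩ := walk_lift_induce p hsupp hu hv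
    exact ⟨q⟩
  · obtain ⟨x, hx⟩ := hne
    exact ⟨⟨x, hx⟩⟩

lemma induce_Wside (hconn : G.Connected) {s : Set V} (hcvx : GConvex G s)
    (a' b' : s) :
    Wside (G.induce s) a' b' = Subtype.val ⁻¹' (Wside G a'.val b'.val) := by
  ext ⟨x, hx⟩
  simp only [Wside, Set.mem_setOf_eq, Set.mem_preimage]
  rw [show a' = ⟨a'.val, a'.prop⟩ from rfl, show b' = ⟨b'.val, b'.prop⟩ from rfl]
  rw [dist_induce hconn hcvx a'.prop hx, dist_induce hconn hcvx b'.prop hx]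

lemma induce_GConvex (hconn : G.Connected) {s : Set V} (hcvx : GConvex G s)
    {C : Set V} (hC : GConvex G C) :
    GConvex (G.induce s) (Subtype.val ⁻¹' C) := by
  rintro ⟨x, hx⟩ hxC ⟨y, hy⟩ hyC ⟨z, hz⟩ hzI
  simp only [gInterval, Set.mem_setOf_eq] at hzI
  rw [dist_induce hconn hcvx hx hz, dist_induce hconn hcvx hz hy,
    dist_induce hconn hcvx hx hy] at hzI
  exact hC x hxC y hyC hzI

end Aux
namespace CubeAux

def D {n : ℕ} (x y : Fin n → Bool) : ℕ :=
  (Finset.univ.filter (fun i => x i ≠ y i)).card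

lemma D_comm {n : ℕ} (x y : Fin n → Bool) : D x y = D y x := by
  unfold D; congr 1; ext i; simp [ne_comm]

lemma D_eq_zero_iff {n : ℕ} {x y : Fin n → Bool} : D x y = 0 ↔ x = y := by
  unfold D
  rw [Finset.card_eq_zero, Finset.filter_eq_empty_iff]
  constructor
  · intro h; funext i; have := h (Finset.mem_univ i); simpa using this
  · intro h i _; simp [h]

lemma D_triangle {n : ℕ} (x y z : Fin n → Bool) : D x z ≤ D x y + D y z := by
  classical
  unfold D
  calc (Finset.univ.filter (fun i => x i ≠ z i)).card
      ≤ ((Finset.univ.filter (fun i => x i ≠ y i)) ∪ (Finset.univ.filter (fun i => y i ≠ z i))).card := by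
        apply Finset.card_le_card
        intro i hi
        simp only [Finset.mem_filter, Finset.mem_univ, true_and, Finset.mem_union] at hi ⊢
        by_contra h
        push_neg at h
        exact hi (h.1.trans h.2)
    _ ≤ _ := Finset.card_union_le _ _

lemma adj_iff_D_one {n : ℕ} {x y : Fin n → Bool} :
    (cubeGraph n).Adj x y ↔ D x y = 1 := by
  unfold D
  rw [Finset.card_eq_one]
  constructor
  · rintro ⟨i, hi, hu⟩
    exact ⟨i, by ext j; simp only [Finset.mem_filter, Finset.mem_univ, true_and,
      Finset.mem_singleton]; exact ⟨fun h => hu j h, fun h => h ▸ hi⟩⟩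
  · rintro ⟨i, hi⟩
    have hmem : ∀ j, x j ≠ y j ↔ j = i := by
      intro j
      constructor
      · intro h
        have : j ∈ Finset.univ.filter (fun i => x i ≠ y i) := by simp [h]
        rw [hi] at this; simpa using this
      · intro hji
        have h2 : j ∈ ({i} : Finset (Fin n)) := by simp [hji]
        rw [← hi] at h2
        simpa using h2
    exact ⟨i, (hmem i).mpr rfl, fun j hj => (hmem j).mp hj⟩

end CubeAux

namespace CubeAux
open Finset

lemma card_filter_congr_off {α : Type*} [Fintype α] [DecidableEq α]
    (P Q : α → Prop) [DecidablePred P] [DecidablePred Q] (i : α)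
    (hoff : ∀ j, j ≠ i → (P j ↔ Q j)) (hi : P i ↔ Q i) :
    (univ.filter P).card = (univ.filter Q).card := by
  congr 1
  ext j
  by_cases hj : j = i
  · subst hj; simp [hi]
  · simp [hoff j hj]

lemma card_filter_succ_off {α : Type*} [Fintype α] [DecidableEq α]
    (P Q : α → Prop) [DecidablePred P] [DecidablePred Q] (i : α)
    (hoff : ∀ j, j ≠ i → (P j ↔ Q j)) (hP : ¬ P i) (hQ : Q i) :
    (univ.filter Q).card = (univ.filter P).card + 1 := by
  have : univ.filter Q = insert i (univ.filter P) := by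
    ext j
    by_cases hj : j = i
    · subst hj; simp [hP, hQ]
    · simp [hj, (hoff j hj).symm]
  rw [this, card_insert_of_notMem (by simp [hP])]

lemma walk_D_le {n : ℕ} {u v : Fin n → Bool} (p : (cubeGraph n).Walk u v) :
    D u v ≤ p.length := by
  induction p with
  | nil => simp [D_eq_zero_iff.mpr rfl]
  | cons h q ih =>
    rename_i a b w
    have h1 : D a b = 1 := adj_iff_D_one.mp h
    calc D a w ≤ D a b + D b w := D_triangle a b w
    _ ≤ 1 + q.length := by omega
    _ = (Walk.cons h q).length := by simp [Walk.length_cons]; omega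

lemma exists_walk_D {n : ℕ} : ∀ (k : ℕ) (u v : Fin n → Bool), D u v = k →
    ∃ p : (cubeGraph n).Walk u v, p.length = k := by
  intro k
  induction k with
  | zero =>
    intro u v h
    obtain rfl := D_eq_zero_iff.mp h
    exact ⟨Walk.nil, rfl⟩
  | succ k ih =>
    intro u v h
    have hne : (univ.filter (fun i => u i ≠ v i)).Nonempty := by
      rw [← Finset.card_pos]; unfold D at h; omega
    obtain ⟨i, hi⟩ := hne
    simp only [mem_filter, mem_univ, true_and] at hi
    set u' := Function.update u i (v i) with hu'
    have hadj : (cubeGraph n).Adj u u' := by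
      refine ⟨i, ?_, ?_⟩
      · simp [hu', Function.update_self]; exact fun hh => hi hh
      · intro j hj
        by_contra hji
        rw [hu', Function.update_of_ne hji] at hj
        exact hj rfl
    have hD : D u' v = k := by
      have : D v u = D v u' + 1 := by
        apply card_filter_succ_off (fun j => v j ≠ u' j) (fun j => v j ≠ u j) i
        · intro j hj
          rw [hu', Function.update_of_ne hj]
        · simp [hu']
        · exact fun hh => hi hh.symm
      rw [D_comm] at h ⊢
      omega
    obtain ⟨q, hq⟩ := ih u' v hD
    exact ⟨Walk.cons hadj q, by simp [hq]⟩

lemma cube_connected (n : ℕ) : (cubeGraph n).Connected := by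
  rw [connected_iff]
  refine ⟨fun u v => ?_, ⟨fun _ => false⟩⟩
  obtain ⟨p, -⟩ := exists_walk_D (D u v) u v rfl
  exact ⟨p⟩

lemma cube_dist {n : ℕ} (u v : Fin n → Bool) : (cubeGraph n).dist u v = D u v := by
  obtain ⟨p, hp⟩ := exists_walk_D (D u v) u v rfl
  refine le_antisymm (hp ▸ dist_le p) ?_
  obtain ⟨q, hq⟩ := ((cube_connected n) u v).exists_walk_length_eq_dist
  rw [← hq]
  exact walk_D_le q

end CubeAux

namespace CubeAux
open Finset

lemma cube_periph {n : ℕ} {a b : Fin n → Bool} (hab : (cubeGraph n).Adj a b)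
    {x : Fin n → Bool} (hx : x ∈ Wside (cubeGraph n) a b) :
    ∃ y, (cubeGraph n).Adj x y ∧ y ∈ Wside (cubeGraph n) b a := by
  obtain ⟨i, hi, hu⟩ := hab
  have hoffab : ∀ j, j ≠ i → a j = b j := by
    intro j hj
    by_contra hh
    exact hj (hu j hh)
  simp only [Wside, Set.mem_setOf_eq, cube_dist] at hx ⊢
  -- x i = a i
  have hxa : x i = a i := by
    by_contra hxa
    -- then x i = b i, so D a x = D b x + 1, contradicting hx
    have hxb : x i = b i := by
      revert hi hxa; cases a i <;> cases b i <;> cases x i <;> simp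
    have : D a x = D b x + 1 := by
      apply card_filter_succ_off (fun j => b j ≠ x j) (fun j => a j ≠ x j) i
      · intro j hj; show b j ≠ x j ↔ a j ≠ x j; rw [hoffab j hj]
      · show ¬ b i ≠ x i; rw [hxb]; simp
      · show a i ≠ x i; exact fun hh => hxa hh.symm
    omega
  set y := Function.update x i (b i) with hy
  have hadjxy : (cubeGraph n).Adj x y := by
    refine ⟨i, ?_, ?_⟩
    · show x i ≠ y i
      rw [hy, Function.update_self, hxa]; exact hi
    · intro j hj
      have hj' : x j ≠ y j := hj
      by_contra hji
      rw [hy, Function.update_of_ne hji] at hj'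
      exact hj' rfl
  refine ⟨y, hadjxy, ?_⟩
  have h1 : D b y = D a x := by
    apply card_filter_congr_off (fun j => b j ≠ y j) (fun j => a j ≠ x j) i
    · intro j hj
      show b j ≠ y j ↔ a j ≠ x j
      rw [hoffab j hj, hy, Function.update_of_ne hj]
    · show b i ≠ y i ↔ a i ≠ x i
      rw [hy, Function.update_self, hxa]
      simp
  have h2 : D a y = D a x + 1 := by
    apply card_filter_succ_off (fun j => a j ≠ x j) (fun j => a j ≠ y j) i
    · intro j hj
      show a j ≠ x j ↔ a j ≠ y j
      rw [hy, Function.update_of_ne hj]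
    · show ¬ a i ≠ x i; rw [hxa]; simp
    · show a i ≠ y i
      rw [hy, Function.update_self]; exact hi
  omega

lemma cube_cons_adj {n : ℕ} (b₁ b₂ : Bool) (x₁ x₂ : Fin n → Bool) :
    (cubeGraph (n+1)).Adj (Fin.cons b₁ x₁) (Fin.cons b₂ x₂) ↔
      (b₁ = b₂ ∧ (cubeGraph n).Adj x₁ x₂) ∨ (b₁ ≠ b₂ ∧ x₁ = x₂) := by
  constructor
  · rintro ⟨i, hi, hu⟩
    rcases Fin.eq_zero_or_eq_succ i with rfl | ⟨j, rfl⟩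
    · right
      simp only [Fin.cons_zero] at hi
      refine ⟨hi, funext fun j => ?_⟩
      by_contra hj
      have := hu j.succ (by simpa using hj)
      exact (Fin.succ_ne_zero j) this
    · left
      simp only [Fin.cons_succ] at hi
      have hb : b₁ = b₂ := by
        by_contra hb
        have := hu 0 (by simpa using hb)
        exact (Fin.succ_ne_zero j) this.symm
      refine ⟨hb, j, hi, fun k hk => ?_⟩
      have := hu k.succ (by simpa using hk)
      exact Fin.succ_injective n this
  · rintro (⟨hb, j, hj, hju⟩ | ⟨hb, hx⟩)
    · refine ⟨j.succ, by simpa using hj, fun k hk => ?_⟩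
      rcases Fin.eq_zero_or_eq_succ k with rfl | ⟨m, rfl⟩
      · simp only [Fin.cons_zero] at hk; exact absurd hb hk
      · simp only [Fin.cons_succ] at hk
        rw [hju m hk]
    · refine ⟨0, by simpa using hb, fun k hk => ?_⟩
      rcases Fin.eq_zero_or_eq_succ k with rfl | ⟨m, rfl⟩
      · rfl
      · simp only [Fin.cons_succ, hx] at hk
        exact absurd rfl hk

end CubeAux

section Forward

open CubeAux

lemma forward_aux : ∀ (N : ℕ) (V : Type u) [Fintype V] (G : SimpleGraph V),
    Fintype.card V ≤ N → IsPartialCube G →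
    (∀ a b, G.Adj a b → ∀ x ∈ Wside G a b, ∃ y, G.Adj x y ∧ y ∈ Wside G b a) →
    ∃ n : ℕ, Nonempty (G ≃g cubeGraph n) := by
  intro N
  induction N with
  | zero =>
    intro V _ G hcard hpc _
    exfalso
    have hne : Nonempty V := hpc.1.nonempty
    have := Fintype.card_pos_iff.mpr hne
    omega
  | succ N ih =>
    intro V _ G hcard hpc hper
    obtain ⟨hconn, ⟨c, hc⟩, hcvx⟩ := hpc
    by_cases hedge : ∃ a b : V, G.Adj a b
    case neg =>
      -- no edges: V is a subsingleton, G ≃g cubeGraph 0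
      push_neg at hedge
      have hsub : ∀ u v : V, u = v := by
        intro u v
        obtain ⟨p⟩ := hconn u v
        cases p with
        | nil => rfl
        | cons h _ => exact absurd h (hedge _ _)
      have hneV : Nonempty V := hconn.nonempty
      refine ⟨0, ⟨?_⟩⟩
      refine { toFun := fun _ => (fun i => i.elim0),
               invFun := fun _ => Classical.arbitrary V,
               left_inv := fun x => hsub _ _,
               right_inv := fun y => funext fun i => i.elim0,
               map_rel_iff' := ?_ }
      intro x y
      constructor
      · rintro ⟨i, -, -⟩
        exact i.elim0
      · intro h
        exact absurd (hsub x y) h.ne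
    case pos =>
    obtain ⟨a, b, hab⟩ := hedge
    obtain ⟨hcab, hcba⟩ := hcvx a b hab
    -- the cross-matching f
    have hcrossall : ∀ x : V, ∃ y, G.Adj x y ∧ (x ∈ Wside G a b → y ∈ Wside G b a) ∧
        (x ∈ Wside G b a → y ∈ Wside G a b) := by
      intro x
      rcases Wside_union hconn hc hab x with hx | hx
      · obtain ⟨y, hy1, hy2⟩ := hper a b hab x hx
        exact ⟨y, hy1, fun _ => hy2, fun hx' => (Wside_disjoint hx hx').elim⟩
      · obtain ⟨y, hy1, hy2⟩ := hper b a hab.symm x hx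
        exact ⟨y, hy1, fun hx' => (Wside_disjoint hx' hx).elim, fun _ => hy2⟩
    choose f hf1 hf2 hf3 using hcrossall
    have hff : ∀ x, f (f x) = x := by
      intro x
      rcases Wside_union hconn hc hab x with hx | hx
      · exact cross_unique hconn hc (a := b) (b := a) hcab (hf2 x hx)
          (hf1 (f x)) (hf3 (f x) (hf2 x hx)) (hf1 x).symm hx
      · exact cross_unique hconn hc (a := a) (b := b) hcba (hf3 x hx)
          (hf1 (f x)) (hf2 (f x) (hf3 x hx)) (hf1 x).symm hx
    set s : Set V := Wside G a b with hs
    haveI : DecidablePred (· ∈ s) := Classical.decPred _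
    have haS : a ∈ s := by
      simp only [hs, Wside, Set.mem_setOf_eq, dist_self, dist_eq_one_iff_adj.mpr hab.symm]
      omega
    have hbS : b ∉ s := by
      intro hbs
      have hbW : b ∈ Wside G b a := by
        simp only [Wside, Set.mem_setOf_eq, dist_self, dist_eq_one_iff_adj.mpr hab]
        omega
      exact Wside_disjoint hbs hbW
    have hfs : ∀ x, x ∉ s → f x ∈ s := by
      intro x hx
      rcases Wside_union hconn hc hab x with hx' | hx'
      · exact absurd hx' hx
      · exact hf3 x hx'
    have hfs' : ∀ x, x ∈ s → f x ∉ s := fun x hx hfx => Wside_disjoint hfx (hf2 x hx)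
    have hnotmem : ∀ x : V, x ∉ s → x ∈ Wside G b a := by
      intro x hx
      rcases Wside_union hconn hc hab x with hx' | hx'
      · exact absurd hx' hx
      · exact hx'
    -- the induced graph on s
    set G' : SimpleGraph ↥s := G.induce s with hG'
    have hcard' : Fintype.card ↥s ≤ N := by
      have h1 := Fintype.card_subtype_lt (p := (· ∈ s)) (x := b) hbS
      have h2 : Fintype.card {x // x ∈ s} = Fintype.card ↥s := by
        congr 1
      omega
    have hpc' : IsPartialCube G' := by
      refine ⟨induce_connected hconn hcab ⟨a, haS⟩, ⟨fun x => c x.val, fun u v h => hc _ _ h⟩, ?_⟩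
      rintro a' b' hadj
      have hadjG : G.Adj a'.val b'.val := hadj
      constructor
      · rw [induce_Wside hconn hcab]
        exact induce_GConvex hconn hcab (hcvx _ _ hadjG).1
      · rw [induce_Wside hconn hcab]
        exact induce_GConvex hconn hcab (hcvx _ _ hadjG).2
    have hper' : ∀ a' b', G'.Adj a' b' → ∀ x ∈ Wside G' a' b',
        ∃ y, G'.Adj x y ∧ y ∈ Wside G' b' a' := by
      rintro a' b' hadj x hx
      have hadjG : G.Adj a'.val b'.val := hadj
      rw [induce_Wside hconn hcab] at hx
      obtain ⟨y, hy1, hy2⟩ := hper a'.val b'.val hadjG x.val hx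
      have hyS : y ∈ s := by
        by_contra hys
        -- then y = f x.val and f-image preserves sides, contradiction
        have hyW : y ∈ Wside G b a := hnotmem y hys
        have hxS : x.val ∈ s := x.prop
        have hyeq : y = f x.val :=
          cross_unique hconn hc (a := a) (b := b) hcba hxS hy1 hyW
            (hf1 x.val) (hf2 x.val hxS)
        have d1 : G.dist a'.val (f x.val) = G.dist a'.val x.val + 1 :=
          cross_dist hconn hc hcab hxS (hf2 x.val hxS) (hf1 x.val) a'.prop
        have d2 : G.dist b'.val (f x.val) = G.dist b'.val x.val + 1 :=
          cross_dist hconn hc hcab hxS (hf2 x.val hxS) (hf1 x.val) b'.prop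
        rw [hyeq] at hy2
        have hx' : G.dist a'.val x.val < G.dist b'.val x.val := hx
        have hy2' : G.dist b'.val (f x.val) < G.dist a'.val (f x.val) := hy2
        omega
      refine ⟨⟨y, hyS⟩, hy1, ?_⟩
      rw [induce_Wside hconn hcab]
      exact hy2
    obtain ⟨n, ⟨φ⟩⟩ := ih ↥s G' hcard' hpc' hper'
    -- assemble the isomorphism G ≃g cubeGraph (n+1)
    -- adjacency facts
    have adj_ff : ∀ x y : V, x ∉ s → y ∉ s → (G.Adj (f x) (f y) ↔ G.Adj x y) := by
      intro x y hx hy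
      have hxW := hnotmem x hx
      have hyW := hnotmem y hy
      constructor
      · intro h
        exact cross_adj hconn hc hcab hcba (hfs x hx) (hfs y hy) hxW hyW
          (hf1 x).symm (hf1 y).symm h
      · intro h
        exact cross_adj hconn hc (a := b) (b := a) hcba hcab hxW hyW
          (hfs x hx) (hfs y hy) (hf1 x) (hf1 y) h
    have adj_mixed : ∀ x y : V, x ∈ s → y ∉ s → (G.Adj x y ↔ x = f y) := by
      intro x y hx hy
      constructor
      · intro h
        exact cross_unique hconn hc (a := b) (b := a) hcab (hnotmem y hy)
          h.symm hx (hf1 y) (hf3 y (hnotmem y hy))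
      · rintro rfl
        exact (hf1 y).symm
    let e : V ≃ (Fin (n+1) → Bool) :=
      { toFun := fun x => if hx : x ∈ s then Fin.cons false (φ ⟨x, hx⟩)
          else Fin.cons true (φ ⟨f x, hfs x hx⟩)
        invFun := fun y => if y 0 = false then (φ.symm (Fin.tail y)).val
          else f (φ.symm (Fin.tail y)).val
        left_inv := by
          intro x
          by_cases hx : x ∈ s
          · simp [hx, hff]
          · simp [hx, hff]
        right_inv := by
          intro y
          by_cases hy : y 0 = false
          · simp only [if_pos hy]
            have hz : (φ.symm (Fin.tail y)).val ∈ s := (φ.symm (Fin.tail y)).prop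
            rw [dif_pos hz]
            rw [show (⟨(φ.symm (Fin.tail y)).val, hz⟩ : ↥s) = φ.symm (Fin.tail y) from rfl]
            rw [φ.apply_symm_apply, ← hy, Fin.cons_self_tail]
          · simp only [if_neg hy]
            have hy' : y 0 = true := by revert hy; cases y 0 <;> simp
            have hz : (φ.symm (Fin.tail y)).val ∈ s := (φ.symm (Fin.tail y)).prop
            rw [dif_neg (hfs' _ hz)]
            have : (⟨f (f (φ.symm (Fin.tail y)).val), hfs _ (hfs' _ hz)⟩ : ↥s)
                = φ.symm (Fin.tail y) := by
              apply Subtype.ext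
              simp [hff]
            rw [this, φ.apply_symm_apply, ← hy', Fin.cons_self_tail] }
    refine ⟨n + 1, ⟨{ toEquiv := e, map_rel_iff' := ?_ }⟩⟩
    intro x y
    show (cubeGraph (n+1)).Adj (e x) (e y) ↔ G.Adj x y
    by_cases hx : x ∈ s <;> by_cases hy : y ∈ s
    · have hex : e x = Fin.cons false (φ ⟨x, hx⟩) := dif_pos hx
      have hey : e y = Fin.cons false (φ ⟨y, hy⟩) := dif_pos hy
      rw [hex, hey, cube_cons_adj]
      simp only [ne_eq, not_true_eq_false, false_and, or_false, true_and]
      rw [φ.map_rel_iff]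
      exact Iff.rfl
    · have hex : e x = Fin.cons false (φ ⟨x, hx⟩) := dif_pos hx
      have hey : e y = Fin.cons true (φ ⟨f y, hfs y hy⟩) := dif_neg hy
      rw [hex, hey, cube_cons_adj]
      simp only [Bool.false_eq_true, false_and, ne_eq, not_false_eq_true, true_and, false_or]
      rw [adj_mixed x y hx hy]
      constructor
      · intro h
        exact Subtype.mk_eq_mk.mp (φ.injective h)
      · intro h
        exact congrArg (fun z => φ z) (Subtype.mk_eq_mk.mpr h)
    · have hex : e x = Fin.cons true (φ ⟨f x, hfs x hx⟩) := dif_neg hx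
      have hey : e y = Fin.cons false (φ ⟨y, hy⟩) := dif_pos hy
      rw [hex, hey, cube_cons_adj]
      simp only [Bool.true_eq_false, false_and, ne_eq, not_false_eq_true, true_and, false_or]
      rw [adj_comm, adj_mixed y x hy hx]
      constructor
      · intro h
        exact (Subtype.mk_eq_mk.mp (φ.injective h)).symm
      · intro h
        exact congrArg (fun z => φ z) (Subtype.mk_eq_mk.mpr h.symm)
    · have hex : e x = Fin.cons true (φ ⟨f x, hfs x hx⟩) := dif_neg hx
      have hey : e y = Fin.cons true (φ ⟨f y, hfs y hy⟩) := dif_neg hy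
      rw [hex, hey, cube_cons_adj]
      simp only [ne_eq, not_true_eq_false, false_and, or_false, true_and]
      rw [φ.map_rel_iff]
      rw [← adj_ff x y hx hy]
      exact Iff.rfl

end Forward

/-- A finite partial cube is strongly peripheral iff it is a hypercube. -/
theorem stmt_13 (G : SimpleGraph V) [Fintype V] (hG : IsPartialCube G) :
    (∀ a b, G.Adj a b →
        Wside G a b = Uside G a b ∧ Wside G b a = Uside G b a) ↔
      ∃ n : ℕ, Nonempty (G ≃g cubeGraph n) := by
  constructor
  · intro hper
    apply forward_aux (Fintype.card V) V G le_rfl hG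
    intro a b hab x hx
    rw [(hper a b hab).1] at hx
    exact hx.2
  · rintro ⟨n, ⟨φ⟩⟩
    have key : ∀ (a b : V), G.Adj a b → Wside G a b = Uside G a b := by
      intro a b hab
      apply Set.Subset.antisymm
      · intro x hx
        refine ⟨hx, ?_⟩
        have hcube : (cubeGraph n).Adj (φ a) (φ b) := φ.map_rel_iff.mpr hab
        have hxcube : φ x ∈ Wside (cubeGraph n) (φ a) (φ b) := (iso_Wside φ a b x).mp hx
        obtain ⟨y', hy1, hy2⟩ := CubeAux.cube_periph hcube hxcube
        refine ⟨φ.symm y', ?_, ?_⟩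
        · rw [← φ.map_rel_iff, φ.apply_symm_apply]
          exact hy1
        · rw [iso_Wside φ b a (φ.symm y'), φ.apply_symm_apply]
          exact hy2
      · intro x hx
        exact hx.1
    intro a b hab
    exact ⟨key a b hab, key b a hab.symm⟩
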